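/- arXiv:1606.05079 — 3 statements merged into one kernel-verified Lean document; each statement's English description precedes it below -/
import Mathlib

section
/- Consider the deterministic liquidation problem with zero discount rate, zero temporary impact, zero terminal liquidation value, unit initial price, and linear permanent impact with constant drift $\overline{\eta}(\nu) = \theta(c^{\text{up}} - c^{\text{down}}(1+a\nu))$ where $c^{\text{up}} < c^{\text{down}}$. The candidate value function $V'(t,w) = \frac{\nu^{\max}}{\overline{\eta}(\nu^{\max})}\left(e^{\overline{\eta}(\nu^{\max})(\tau(w)\wedge(T-t))} - 1\right)$ with $\tau(w) = w/\nu^{\max}$ is continuously differentiable on $([0,T]\times[0,w_0]) \setminus G$, where $G = \{(t,w): w/\nu^{\max} = T-t\}$, and is a classical solution of the HJB equation $-\partial_t V' - \sup_{\nu \in [0,\nu^{\max}]}\{\nu - \nu\,\partial_w V' + \overline{\eta}(\nu) V'\} = 0$ there, but $V'$ fails to be differentiable on $G$. -/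
open Real Set

/-- The candidate value function of the deterministic counterexample is C¹ off the kink
set `G`, a classical solution of the HJB equation there, but not differentiable on `G`. -/
theorem stmt8 (T w0 θ a cup cdown νmax : ℝ)
    (hT : 0 < T) (hw0 : 0 < w0) (hθ : 0 < θ) (ha : 0 < a)
    (hcup : 0 < cup) (hcc : cup < cdown) (hνmax : w0 / T < νmax)
    (ηb : ℝ → ℝ) (hηb : ∀ νv, ηb νv = θ * (cup - cdown * (1 + a * νv)))
    (V : ℝ × ℝ → ℝ)
    (hV : ∀ p : ℝ × ℝ, V p = (νmax / ηb νmax) *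
        (Real.exp (ηb νmax * min (p.2 / νmax) (T - p.1)) - 1))
    (G : Set (ℝ × ℝ)) (hG : G = {p : ℝ × ℝ | p.2 / νmax = T - p.1}) :
    ContDiffOn ℝ 1 V ((Set.Icc 0 T ×ˢ Set.Icc 0 w0) \ G)
    ∧ (∀ p ∈ (Set.Icc 0 T ×ˢ Set.Icc 0 w0) \ G,
        -(deriv (fun t' => V (t', p.2)) p.1)
          - sSup ((fun νv => νv - νv * deriv (fun w' => V (p.1, w')) p.2 + ηb νv * V p)
              '' Set.Icc 0 νmax) = 0)
    ∧ (∀ p ∈ G ∩ (Set.Ico 0 T ×ˢ Set.Icc 0 w0), ¬ DifferentiableAt ℝ V p) := by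
  have hν : 0 < νmax := lt_trans (div_pos hw0 hT) hνmax
  have hcd : 0 < cdown := lt_trans hcup hcc
  have hKeq : ηb νmax = θ * (cup - cdown * (1 + a * νmax)) := hηb νmax
  set K := ηb νmax with hKdef
  have hKneg : K < 0 := by
    rw [hKeq]
    have h1 : cup - cdown * (1 + a * νmax) < 0 := by nlinarith [mul_pos hcd (mul_pos ha hν)]
    exact mul_neg_of_pos_of_neg hθ h1
  have hKne : K ≠ 0 := ne_of_lt hKneg
  set C := νmax / K with hCdef
  have hCK : C * K = νmax := div_mul_cancel₀ _ hKne
  have hCneg : C < 0 := div_neg_of_pos_of_neg hν hKneg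
  have hCK' : C * (θ * (cup - cdown * (1 + a * νmax))) = νmax := by rw [← hKeq]; exact hCK
  have hfac : 0 ≤ 1 + θ * cdown * a * C := by
    have h1 : 0 ≤ C * (cup - cdown) * θ := by
      have := mul_nonneg (mul_nonneg (neg_nonneg.2 hCneg.le) (by linarith : (0:ℝ) ≤ cdown - cup)) hθ.le
      nlinarith
    nlinarith
  have hVt : ∀ t' w' : ℝ, V (t', w') =
      C * (Real.exp (K * min (w' / νmax) (T - t')) - 1) := fun t' w' => hV (t', w')
  -- open regions
  have hAopen : IsOpen {p : ℝ × ℝ | p.2 / νmax < T - p.1} :=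
    isOpen_lt (by fun_prop) (by fun_prop)
  have hBopen : IsOpen {p : ℝ × ℝ | T - p.1 < p.2 / νmax} :=
    isOpen_lt (by fun_prop) (by fun_prop)
  -- smooth pieces
  have hcdA : ContDiff ℝ 1 (fun q : ℝ × ℝ => C * (Real.exp (K * (q.2 / νmax)) - 1)) :=
    contDiff_const.mul (((Real.contDiff_exp.of_le le_top).comp
      (contDiff_const.mul (contDiff_snd.div_const νmax))).sub contDiff_const)
  have hcdB : ContDiff ℝ 1 (fun q : ℝ × ℝ => C * (Real.exp (K * (T - q.1)) - 1)) :=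
    contDiff_const.mul (((Real.contDiff_exp.of_le le_top).comp
      (contDiff_const.mul (contDiff_const.sub contDiff_fst))).sub contDiff_const)
  -- eventual equalities
  have hVA : ∀ p ∈ {p : ℝ × ℝ | p.2 / νmax < T - p.1},
      V =ᶠ[nhds p] fun q : ℝ × ℝ => C * (Real.exp (K * (q.2 / νmax)) - 1) := by
    intro p hp
    filter_upwards [hAopen.eventually_mem hp] with q hq
    rw [hV q, min_eq_left (le_of_lt hq)]
  have hVB : ∀ p ∈ {p : ℝ × ℝ | T - p.1 < p.2 / νmax},
      V =ᶠ[nhds p] fun q : ℝ × ℝ => C * (Real.exp (K * (T - q.1)) - 1) := by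
    intro p hp
    filter_upwards [hBopen.eventually_mem hp] with q hq
    rw [hV q, min_eq_right (le_of_lt hq)]
  -- partial derivative computations off G
  have hdtA : ∀ p ∈ {p : ℝ × ℝ | p.2 / νmax < T - p.1},
      deriv (fun t' => V (t', p.2)) p.1 = 0 := by
    intro p hp
    have hcont : Continuous fun t' : ℝ => ((t', p.2) : ℝ × ℝ) := by fun_prop
    have hev : (fun t' => V (t', p.2)) =ᶠ[nhds p.1]
        fun _ => C * (Real.exp (K * (p.2 / νmax)) - 1) := by
      filter_upwards [(hAopen.preimage hcont).eventually_mem hp] with t' ht'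
      rw [hVt t' p.2, min_eq_left (le_of_lt ht')]
    rw [hev.deriv_eq, deriv_const]
  have hdwA : ∀ p ∈ {p : ℝ × ℝ | p.2 / νmax < T - p.1},
      deriv (fun w' => V (p.1, w')) p.2 = Real.exp (K * (p.2 / νmax)) := by
    intro p hp
    have hcont : Continuous fun w' : ℝ => ((p.1, w') : ℝ × ℝ) := by fun_prop
    have hev : (fun w' => V (p.1, w')) =ᶠ[nhds p.2]
        fun w' => C * (Real.exp (K * (w' / νmax)) - 1) := by
      filter_upwards [(hAopen.preimage hcont).eventually_mem hp] with w' hw'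
      rw [hVt p.1 w', min_eq_left (le_of_lt hw')]
    have h1 : HasDerivAt (fun w' : ℝ => K * (w' / νmax)) (K / νmax) p.2 := by
      simpa [mul_one_div, div_eq_mul_inv] using ((hasDerivAt_id p.2).div_const νmax).const_mul K
    have h2 := (Real.hasDerivAt_exp (K * (p.2 / νmax))).comp p.2 h1
    have h3 : HasDerivAt (fun w' => C * (Real.exp (K * (w' / νmax)) - 1))
        (C * (Real.exp (K * (p.2 / νmax)) * (K / νmax))) p.2 := by
      simpa [Function.comp] using (h2.sub_const 1).const_mul C
    have hval : C * (Real.exp (K * (p.2 / νmax)) * (K / νmax)) = Real.exp (K * (p.2 / νmax)) := by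
      rw [hCdef]; field_simp
    rw [hev.deriv_eq, h3.deriv, hval]
  have hdtB : ∀ p ∈ {p : ℝ × ℝ | T - p.1 < p.2 / νmax},
      deriv (fun t' => V (t', p.2)) p.1 = -(νmax * Real.exp (K * (T - p.1))) := by
    intro p hp
    have hcont : Continuous fun t' : ℝ => ((t', p.2) : ℝ × ℝ) := by fun_prop
    have hev : (fun t' => V (t', p.2)) =ᶠ[nhds p.1]
        fun t' => C * (Real.exp (K * (T - t')) - 1) := by
      filter_upwards [(hBopen.preimage hcont).eventually_mem hp] with t' ht'
      rw [hVt t' p.2, min_eq_right (le_of_lt ht')]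
    have h1 : HasDerivAt (fun t' : ℝ => K * (T - t')) (-K) p.1 := by
      simpa using ((hasDerivAt_id p.1).const_sub T).const_mul K
    have h2 := (Real.hasDerivAt_exp (K * (T - p.1))).comp p.1 h1
    have h3 : HasDerivAt (fun t' => C * (Real.exp (K * (T - t')) - 1))
        (C * (Real.exp (K * (T - p.1)) * -K)) p.1 := by
      simpa [Function.comp] using (h2.sub_const 1).const_mul C
    have hval : C * (Real.exp (K * (T - p.1)) * -K) = -(νmax * Real.exp (K * (T - p.1))) := by
      linear_combination (-Real.exp (K * (T - p.1))) * hCK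
    rw [hev.deriv_eq, h3.deriv, hval]
  have hdwB : ∀ p ∈ {p : ℝ × ℝ | T - p.1 < p.2 / νmax},
      deriv (fun w' => V (p.1, w')) p.2 = 0 := by
    intro p hp
    have hcont : Continuous fun w' : ℝ => ((p.1, w') : ℝ × ℝ) := by fun_prop
    have hev : (fun w' => V (p.1, w')) =ᶠ[nhds p.2]
        fun _ => C * (Real.exp (K * (T - p.1)) - 1) := by
      filter_upwards [(hBopen.preimage hcont).eventually_mem hp] with w' hw'
      rw [hVt p.1 w', min_eq_right (le_of_lt hw')]
    rw [hev.deriv_eq, deriv_const]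
  refine ⟨?_, ?_, ?_⟩
  · -- C¹ regularity off G
    intro p hp
    obtain ⟨hpbox, hpG⟩ := hp
    have hne : p.2 / νmax ≠ T - p.1 := by rw [hG] at hpG; exact hpG
    rcases lt_or_gt_of_ne hne with hlt | hgt
    · exact ((hcdA.contDiffAt.congr_of_eventuallyEq (hVA p hlt))).contDiffWithinAt
    · exact ((hcdB.contDiffAt.congr_of_eventuallyEq (hVB p hgt))).contDiffWithinAt
  · -- HJB equation
    rintro p ⟨hpbox, hpG⟩
    rw [Set.mem_prod] at hpbox
    obtain ⟨hpt, hpw⟩ := hpbox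
    have hne : p.2 / νmax ≠ T - p.1 := by rw [hG] at hpG; exact hpG
    rcases lt_or_gt_of_ne hne with hlt | hgt
    · -- region A : V depends on w only
      set E := Real.exp (K * (p.2 / νmax)) with hEdef
      have hE0 : 0 < E := Real.exp_pos _
      have hE1 : E ≤ 1 := by
        rw [hEdef, Real.exp_le_one_iff]
        have : 0 ≤ p.2 / νmax := div_nonneg hpw.1 hν.le
        nlinarith
      have hVp : V p = C * (E - 1) := by rw [hV p, min_eq_left (le_of_lt hlt)]
      rw [hdtA p hlt, hdwA p hlt, ← hEdef]
      have hsup : sSup ((fun νv => νv - νv * E + ηb νv * V p) '' Set.Icc 0 νmax) = 0 := by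
        apply IsGreatest.csSup_eq
        constructor
        · refine ⟨νmax, ⟨hν.le, le_refl _⟩, ?_⟩
          show νmax - νmax * E + ηb νmax * V p = 0
          rw [hVp, ← hKdef]
          linear_combination (E - 1) * hCK
        · rintro y ⟨ν, ⟨hν0, hνle⟩, rfl⟩
          show ν - ν * E + ηb ν * V p ≤ 0
          rw [hVp, hηb ν]
          have hid : ν - ν * E + θ * (cup - cdown * (1 + a * ν)) * (C * (E - 1)) =
              -((νmax - ν) * (1 - E) * (1 + θ * cdown * a * C)) := by
            linear_combination (E - 1) * hCK'
          rw [hid]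
          have := mul_nonneg (mul_nonneg (sub_nonneg.2 hνle) (sub_nonneg.2 hE1)) hfac
          linarith
      rw [hsup]; ring
    · -- region B : V depends on t only
      set E := Real.exp (K * (T - p.1)) with hEdef
      have hE0 : 0 < E := Real.exp_pos _
      have hE1 : E ≤ 1 := by
        rw [hEdef, Real.exp_le_one_iff]
        have : 0 ≤ T - p.1 := by
          have := hpt.2
          linarith
        nlinarith
      have hVp : V p = C * (E - 1) := by rw [hV p, min_eq_right (le_of_lt hgt)]
      rw [hdtB p hgt, hdwB p hgt, ← hEdef]
      have hsup : sSup ((fun νv => νv - νv * 0 + ηb νv * V p) '' Set.Icc 0 νmax)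
          = νmax * E := by
        apply IsGreatest.csSup_eq
        constructor
        · refine ⟨νmax, ⟨hν.le, le_refl _⟩, ?_⟩
          show νmax - νmax * 0 + ηb νmax * V p = νmax * E
          rw [hVp, ← hKdef]
          linear_combination (E - 1) * hCK
        · rintro y ⟨ν, ⟨hν0, hνle⟩, rfl⟩
          show ν - ν * 0 + ηb ν * V p ≤ νmax * E
          rw [hVp, hηb ν]
          have hid : ν - ν * 0 + θ * (cup - cdown * (1 + a * ν)) * (C * (E - 1)) =
              νmax * E - (νmax - ν) * (1 + θ * cdown * a * C * (1 - E)) := by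
            linear_combination (E - 1) * hCK'
          rw [hid]
          have h1 : 0 ≤ 1 + θ * cdown * a * C * (1 - E) := by
            have hqC : θ * cdown * a * C ≤ 0 := by
              have := mul_nonneg (mul_nonneg (mul_nonneg hθ.le hcd.le) ha.le) (neg_nonneg.2 hCneg.le)
              nlinarith
            nlinarith
          nlinarith [mul_nonneg (sub_nonneg.2 hνle) h1]
      rw [hsup]; ring
  · -- non-differentiability on G
    rintro p ⟨hpG, hpbox⟩ hd
    rw [hG] at hpG
    have hτ : p.2 / νmax = T - p.1 := hpG
    set E := Real.exp (K * (T - p.1)) with hEdef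
    have hE0 : 0 < E := Real.exp_pos _
    -- the partial map in t
    have hdiff : DifferentiableAt ℝ (fun t' => V (t', p.2)) p.1 := by
      have hι : DifferentiableAt ℝ (fun t' : ℝ => ((t', p.2) : ℝ × ℝ)) p.1 :=
        (differentiableAt_id.prodMk (differentiableAt_const _))
      exact hd.comp p.1 hι
    set d := deriv (fun t' => V (t', p.2)) p.1 with hddef
    have hder : HasDerivAt (fun t' => V (t', p.2)) d p.1 := hdiff.hasDerivAt
    -- left: constant
    have hleft : HasDerivWithinAt (fun t' => V (t', p.2)) 0 (Iic p.1) p.1 := by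
      have hc : HasDerivWithinAt (fun _ : ℝ => C * (E - 1)) 0 (Iic p.1) p.1 :=
        (hasDerivAt_const _ _).hasDerivWithinAt
      apply hc.congr
      · intro t' ht'
        rw [hVt t' p.2, min_eq_left, hτ, hEdef]
        rw [hτ]; simp only [mem_Iic] at ht'; linarith
      · rw [hVt p.1 p.2, min_eq_left (le_of_eq hτ), hτ, hEdef]
    -- right: exponential in t
    have hright : HasDerivWithinAt (fun t' => V (t', p.2)) (-(νmax * E)) (Ici p.1) p.1 := by
      have h1 : HasDerivAt (fun t' : ℝ => K * (T - t')) (-K) p.1 := by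
        simpa using ((hasDerivAt_id p.1).const_sub T).const_mul K
      have h2 := (Real.hasDerivAt_exp (K * (T - p.1))).comp p.1 h1
      have h3 : HasDerivAt (fun t' => C * (Real.exp (K * (T - t')) - 1))
          (C * (Real.exp (K * (T - p.1)) * -K)) p.1 := by
        simpa [Function.comp] using (h2.sub_const 1).const_mul C
      have hval : C * (Real.exp (K * (T - p.1)) * -K) = -(νmax * E) := by
        rw [hEdef]; linear_combination (-Real.exp (K * (T - p.1))) * hCK
      rw [← hval]
      apply h3.hasDerivWithinAt.congr
      · intro t' ht'
        rw [hVt t' p.2, min_eq_right]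
        rw [hτ]; simp only [mem_Ici] at ht'; linarith
      · rw [hVt p.1 p.2, min_eq_right (ge_of_eq hτ)]
    have h0 : d = 0 :=
      UniqueDiffWithinAt.eq_deriv _ ((uniqueDiffOn_Iic p.1) p.1 (mem_Iic.2 le_rfl))
        hder.hasDerivWithinAt hleft
    have hE : d = -(νmax * E) :=
      UniqueDiffWithinAt.eq_deriv _ ((uniqueDiffOn_Ici p.1) p.1 (mem_Ici.2 le_rfl))
        hder.hasDerivWithinAt hright
    rw [h0] at hE
    have := mul_pos hν hE0
    linarith
end

section
/- In the setting of the counterexample (Section 5.2), let $\phi$ be a $C^1$ function such that $V' - \phi$ has a local maximum at a point $(\bar{t}, \bar{w}) \in G = \{(t,w): w = \nu^{\max}(T-t)\}$. Then the partial derivatives of $\phi$ satisfy: $-\nu^{\max} e^{\overline{\eta}(\nu^{\max})(T-\bar{t})} \le \partial_t\phi(\bar{t},\bar{w}) \le 0$ and $0 \le \partial_w\phi(\bar{t},\bar{w}) \le e^{\overline{\eta}(\nu^{\max})\tau(\bar{w})}$, and along $G$, $(\partial_t\phi - \nu^{\max}\partial_w\phi)(\bar{t},\bar{w}) = -\nu^{\max}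 e^{\overline{\eta}(\nu^{\max})(T-\bar{t})}$. Consequently $V'$ satisfies the viscosity subsolution property $-\partial_t\phi - \sup_{\nu\in[0,\nu^{\max}]}\{\nu - \nu\,\partial_w\phi + \overline{\eta}(\nu)V'\} \le 0$ at $(\bar{t},\bar{w})$. -/
open Real Set Filter

lemma right_deriv_nonpos' {u : ℝ → ℝ} {u' : ℝ} (h : HasDerivAt u u' 0)
    (hm : ∀ᶠ s in nhdsWithin 0 (Ioi 0), u s ≤ u 0) : u' ≤ 0 := by
  have ht : Tendsto (slope u 0) (nhdsWithin 0 (Ioi 0)) (nhds u') :=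
    (hasDerivAt_iff_tendsto_slope.mp h).mono_left
      (nhdsWithin_mono _ (fun x hx => ne_of_gt hx))
  refine le_of_tendsto ht ?_
  filter_upwards [hm, self_mem_nhdsWithin] with s hs hs0
  rw [slope_def_field]
  exact div_nonpos_of_nonpos_of_nonneg (by linarith) (by simp at hs0 ⊢; linarith)

lemma left_deriv_nonneg' {u : ℝ → ℝ} {u' : ℝ} (h : HasDerivAt u u' 0)
    (hm : ∀ᶠ s in nhdsWithin 0 (Iio 0), u s ≤ u 0) : 0 ≤ u' := by
  have ht : Tendsto (slope u 0) (nhdsWithin 0 (Iio 0)) (nhds u') :=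
    (hasDerivAt_iff_tendsto_slope.mp h).mono_left
      (nhdsWithin_mono _ (fun x hx => ne_of_lt hx))
  refine ge_of_tendsto ht ?_
  filter_upwards [hm, self_mem_nhdsWithin] with s hs hs0
  rw [slope_def_field]
  simp only [mem_Iio] at hs0; rw [div_nonneg_iff]; right
  constructor <;> linarith

/-- Viscosity subsolution property of the candidate value function at points of the
kink set `G`, together with the derivative bounds for test functions. -/
theorem stmt9 (T θ a cup cdown νmax : ℝ)
    (hT : 0 < T) (hθ : 0 < θ) (ha : 0 < a)
    (hcup : 0 < cup) (hcc : cup < cdown) (hνmax : 0 < νmax)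
    (ηb : ℝ → ℝ) (hηb : ∀ νv, ηb νv = θ * (cup - cdown * (1 + a * νv)))
    (V : ℝ × ℝ → ℝ)
    (hV : ∀ p : ℝ × ℝ, V p = (νmax / ηb νmax) *
        (Real.exp (ηb νmax * min (p.2 / νmax) (T - p.1)) - 1))
    (tb wb : ℝ) (htb : tb ∈ Set.Ioo 0 T) (hwb : wb = νmax * (T - tb))
    (φ : ℝ × ℝ → ℝ) (hφ : ContDiff ℝ 1 φ)
    (hmax : IsLocalMax (fun p => V p - φ p) (tb, wb)) :
    (-(νmax * Real.exp (ηb νmax * (T - tb))) ≤ fderiv ℝ φ (tb, wb) (1, 0)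
      ∧ fderiv ℝ φ (tb, wb) (1, 0) ≤ 0)
    ∧ (0 ≤ fderiv ℝ φ (tb, wb) (0, 1)
      ∧ fderiv ℝ φ (tb, wb) (0, 1) ≤ Real.exp (ηb νmax * (wb / νmax)))
    ∧ (fderiv ℝ φ (tb, wb) (1, 0) - νmax * fderiv ℝ φ (tb, wb) (0, 1)
        = -(νmax * Real.exp (ηb νmax * (T - tb))))
    ∧ (-(fderiv ℝ φ (tb, wb) (1, 0))
        - sSup ((fun νv => νv - νv * fderiv ℝ φ (tb, wb) (0, 1) + ηb νv * V (tb, wb))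
            '' Set.Icc 0 νmax) ≤ 0) := by
  set η : ℝ := ηb νmax with hηdef
  have hη : η < 0 := by
    rw [hηdef, hηb]
    have h1 : cup - cdown * (1 + a * νmax) < 0 := by
      nlinarith [mul_pos (mul_pos (hcup.trans hcc) ha) hνmax]
    exact mul_neg_of_pos_of_neg hθ h1
  have hηne : η ≠ 0 := ne_of_lt hη
  have hνne : νmax ≠ 0 := ne_of_gt hνmax
  set A : ℝ := fderiv ℝ φ (tb, wb) (1, 0) with hA
  set B : ℝ := fderiv ℝ φ (tb, wb) (0, 1) with hB
  set E : ℝ := Real.exp (η * (T - tb)) with hE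
  have hwT : wb / νmax = T - tb := by rw [hwb]; field_simp
  have hVb : V (tb, wb) = (νmax / η) * (E - 1) := by
    rw [hV]; simp [hwT, min_self, hE]
  -- directional derivatives of φ along lines
  have hφd : ∀ c d : ℝ, HasDerivAt (fun s : ℝ => φ (tb + c * s, wb + d * s))
      (c * A + d * B) 0 := by
    intro c d
    have hγ : HasDerivAt (fun s : ℝ => ((tb + c * s, wb + d * s) : ℝ × ℝ)) (c, d) 0 := by
      have h1 : HasDerivAt (fun s : ℝ => tb + c * s) c 0 := by
        simpa using ((hasDerivAt_id (0:ℝ)).const_mul c).const_add tb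
      have h2 : HasDerivAt (fun s : ℝ => wb + d * s) d 0 := by
        simpa using ((hasDerivAt_id (0:ℝ)).const_mul d).const_add wb
      exact h1.prodMk h2
    have hφ' : HasFDerivAt φ (fderiv ℝ φ (tb, wb))
        ((fun s : ℝ => ((tb + c * s, wb + d * s) : ℝ × ℝ)) 0) := by
      simpa using ((hφ.differentiable one_ne_zero) (tb, wb)).hasFDerivAt
    have := hφ'.comp_hasDerivAt 0 hγ
    have hcd : ((c, d) : ℝ × ℝ) = c • ((1:ℝ), (0:ℝ)) + d • ((0:ℝ), (1:ℝ)) := by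
      simp [Prod.ext_iff]
    rw [hcd, map_add, map_smul, map_smul] at this
    simp [smul_eq_mul] at this; exact this
  have hline : ∀ c d : ℝ, ∀ᶠ s in nhds (0:ℝ),
      V (tb + c * s, wb + d * s) - φ (tb + c * s, wb + d * s) ≤ V (tb, wb) - φ (tb, wb) := by
    intro c d
    have hcont : Tendsto (fun s : ℝ => ((tb + c * s, wb + d * s) : ℝ × ℝ)) (nhds 0)
        (nhds (tb, wb)) := by
      have : Continuous (fun s : ℝ => ((tb + c * s, wb + d * s) : ℝ × ℝ)) := by fun_prop
      simpa using this.tendsto 0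
    exact hcont.eventually hmax
  -- derivative of the smooth branch ψ s = (νmax/η)(exp(η(T-tb-s)) - 1)
  have hψ : HasDerivAt (fun s : ℝ => (νmax / η) * (Real.exp (η * (T - tb - s)) - 1))
      (-(νmax * E)) 0 := by
    have h1 : HasDerivAt (fun s : ℝ => η * (T - tb - s)) (-η) 0 := by
      simpa using ((hasDerivAt_const (0:ℝ) (T - tb)).sub (hasDerivAt_id (0:ℝ))).const_mul η
    have h2 := ((h1.exp).sub_const 1).const_mul (νmax / η)
    refine h2.congr_deriv ?_
    rw [hE]; field_simp; ring
  -- derivative of the smooth branch χ s = (νmax/η)(exp(η((wb+s)/νmax)) - 1)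
  have hχ : HasDerivAt (fun s : ℝ => (νmax / η) * (Real.exp (η * ((wb + s) / νmax)) - 1))
      E 0 := by
    have h1 : HasDerivAt (fun s : ℝ => η * ((wb + s) / νmax)) (η / νmax) 0 := by
      have : HasDerivAt (fun s : ℝ => (wb + s) / νmax) (1 / νmax) 0 := by
        simpa using ((hasDerivAt_id (0:ℝ)).const_add wb).div_const νmax
      exact (this.const_mul η).congr_deriv (by ring)
    have h2 := ((h1.exp).sub_const 1).const_mul (νmax / η)
    refine h2.congr_deriv ?_
    rw [hE, add_zero, hwT]
    field_simp
  -- (1) A ≤ 0 : V is constant in t to the left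
  have hAle : A ≤ 0 := by
    have hu : HasDerivAt (fun s : ℝ => V (tb, wb) - φ (tb + s, wb)) (-A) 0 := by
      have := (hasDerivAt_const (0:ℝ) (V (tb, wb))).sub (hφd 1 0)
      simp at this; exact this
    have := left_deriv_nonneg' hu ?_
    · linarith
    · filter_upwards [(hline 1 0).filter_mono nhdsWithin_le_nhds, self_mem_nhdsWithin]
        with s hs hs0
      simp only [one_mul, zero_mul, add_zero, mem_Iio] at hs hs0 ⊢
      have h1 : min (wb / νmax) (T - (tb + s)) = min (wb / νmax) (T - tb) := by
        rw [hwT, min_eq_left (by linarith), min_self]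
      have hVeq : V (tb + s, wb) = V (tb, wb) := by
        rw [hV (tb + s, wb), hV (tb, wb)]
        simp only [h1]
      rw [hVeq] at hs
      linarith
  -- (2) -(νmax * E) ≤ A : V follows ψ to the right
  have hAge : -(νmax * E) ≤ A := by
    have hu : HasDerivAt
        (fun s : ℝ => (νmax / η) * (Real.exp (η * (T - tb - s)) - 1) - φ (tb + s, wb))
        (-(νmax * E) - A) 0 := by
      have := hψ.sub (hφd 1 0)
      simp at this; exact this
    have := right_deriv_nonpos' hu ?_
    · linarith
    · filter_upwards [(hline 1 0).filter_mono nhdsWithin_le_nhds, self_mem_nhdsWithin]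
        with s hs hs0
      simp only [one_mul, zero_mul, add_zero, sub_zero, mem_Ioi] at hs hs0 ⊢
      have h1 : min (wb / νmax) (T - (tb + s)) = T - tb - s := by
        rw [hwT, min_eq_right (by linarith)]
        ring
      have hVeq : V (tb + s, wb) = (νmax / η) * (Real.exp (η * (T - tb - s)) - 1) := by
        rw [hV (tb + s, wb)]
        simp only [h1, hηdef]
      have h0 : (νmax / η) * (Real.exp (η * (T - tb)) - 1) = V (tb, wb) := by
        rw [hVb, hE]
      rw [hVeq] at hs
      rw [h0]
      linarith
  -- (3) 0 ≤ B : V is constant in w to the right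
  have hBge : 0 ≤ B := by
    have hu : HasDerivAt (fun s : ℝ => V (tb, wb) - φ (tb, wb + s)) (-B) 0 := by
      have := (hasDerivAt_const (0:ℝ) (V (tb, wb))).sub (hφd 0 1)
      simp at this; exact this
    have := right_deriv_nonpos' hu ?_
    · linarith
    · filter_upwards [(hline 0 1).filter_mono nhdsWithin_le_nhds, self_mem_nhdsWithin]
        with s hs hs0
      simp only [one_mul, zero_mul, add_zero, mem_Ioi] at hs hs0 ⊢
      have hsd : 0 ≤ s / νmax := le_of_lt (div_pos hs0 hνmax)
      have h1 : min ((wb + s) / νmax) (T - tb) = T - tb :=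
        min_eq_right (by rw [add_div, hwT]; linarith)
      have h2 : min (wb / νmax) (T - tb) = T - tb := by rw [hwT, min_self]
      have hVeq : V (tb, wb + s) = V (tb, wb) := by
        rw [hV (tb, wb + s), hV (tb, wb)]
        simp only [h1, h2]
      rw [hVeq] at hs
      linarith
  -- (4) B ≤ E : V follows χ to the left
  have hBle : B ≤ E := by
    have hu : HasDerivAt
        (fun s : ℝ => (νmax / η) * (Real.exp (η * ((wb + s) / νmax)) - 1) - φ (tb, wb + s))
        (E - B) 0 := by
      have := hχ.sub (hφd 0 1)
      simp at this; exact this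
    have := left_deriv_nonneg' hu ?_
    · linarith
    · filter_upwards [(hline 0 1).filter_mono nhdsWithin_le_nhds, self_mem_nhdsWithin]
        with s hs hs0
      simp only [one_mul, zero_mul, add_zero, mem_Iio] at hs hs0 ⊢
      have hsd : s / νmax < 0 := div_neg_of_neg_of_pos hs0 hνmax
      have h1 : min ((wb + s) / νmax) (T - tb) = (wb + s) / νmax :=
        min_eq_left (by rw [add_div, hwT]; linarith)
      have hVeq : V (tb, wb + s) = (νmax / η) * (Real.exp (η * ((wb + s) / νmax)) - 1) := by
        rw [hV (tb, wb + s)]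
        simp only [h1, hηdef]
      have h0 : (νmax / η) * (Real.exp (η * (wb / νmax)) - 1) = V (tb, wb) := by
        rw [hVb, hE, hwT]
      rw [hVeq] at hs
      rw [h0]
      linarith
  -- (5) tangential identity : A - νmax * B = -(νmax * E)
  have htan : A - νmax * B = -(νmax * E) := by
    have hu := hψ.sub (hφd 1 (-νmax))
    have hVeq : ∀ r : ℝ, V (tb + 1 * r, wb + (-νmax) * r)
        = (νmax / η) * (Real.exp (η * (T - tb - r)) - 1) := by
      intro r
      have h1 : (wb + (-νmax) * r) / νmax = T - tb - r := by
        rw [add_div, hwT]; field_simp; ring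
      have h2 : min ((wb + (-νmax) * r) / νmax) (T - (tb + 1 * r)) = T - tb - r := by
        rw [h1, one_mul]
        have : T - (tb + r) = T - tb - r := by ring
        rw [this, min_self]
      rw [hV (tb + 1 * r, wb + (-νmax) * r)]
      simp only [h2, hηdef]
    have hloc : IsLocalMax
        (fun s : ℝ => (νmax / η) * (Real.exp (η * (T - tb - s)) - 1)
          - φ (tb + 1 * s, wb + (-νmax) * s)) 0 := by
      filter_upwards [hline 1 (-νmax)] with s hs
      rw [← hVeq s, ← hVeq 0]
      have hz : ((tb + 1 * 0, wb + (-νmax) * 0) : ℝ × ℝ) = (tb, wb) := by norm_num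
      rw [hz]
      exact hs
    have hzero := hloc.hasDerivAt_eq_zero hu
    linear_combination -hzero
  refine ⟨⟨hAge, hAle⟩, ⟨hBge, by rw [hwT]; exact hBle⟩, htan, ?_⟩
  -- (6) subsolution inequality
  set f : ℝ → ℝ := fun νv => νv - νv * B + ηb νv * V (tb, wb) with hf
  have hcont : Continuous f := by
    have : f = fun νv => νv - νv * B + (θ * (cup - cdown * (1 + a * νv))) * V (tb, wb) := by
      funext νv; rw [hf]; simp only [hηb]
    rw [this]; fun_prop
  have hbdd : BddAbove (f '' Set.Icc 0 νmax) :=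
    (isCompact_Icc.image hcont).bddAbove
  have hmem : f νmax ∈ f '' Set.Icc 0 νmax :=
    mem_image_of_mem f ⟨le_of_lt hνmax, le_rfl⟩
  have hle : f νmax ≤ sSup (f '' Set.Icc 0 νmax) := le_csSup hbdd hmem
  have hfν : f νmax = νmax * E - νmax * B := by
    rw [hf]
    simp only [hVb, ← hηdef]
    field_simp
    ring
  have hAeq : -A = νmax * E - νmax * B := by linarith [htan]
  calc -A - sSup (f '' Set.Icc 0 νmax) ≤ -A - f νmax := by linarith
    _ = 0 := by rw [hfν, hAeq]; ring
end

section
/- The function $V'^{,\infty}(w) = -\frac{1}{\theta c^{\text{down}} a}(e^{-w\theta a c^{\text{down}}} - 1)$ (independent of $t$) is a strict classical supersolution of the HJB equation $-\partial_t V - \sup_{\nu \in [0,\nu^{\max}]}\{\nu - \nu\,\partial_w V + \overline{\eta}(\nu)V\} = 0$ for every finite $\nu^{\max}$, where $\overline{\eta}(\nu) = \theta(c^{\text{up}} - c^{\text{down}}(1+a\nu))$ with $0 < c^{\text{up}} < c^{\text{down}}$, $w > 0$. -/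
open Real Set

/-- `V'^{,∞}` is a strict classical supersolution of the HJB equation for every
finite `νmax`: since `∂_t V'^{,∞} = 0`, this says that the Hamiltonian supremum is
strictly negative for `w > 0`. -/
theorem stmt11 (θ a cup cdown νmax w : ℝ)
    (hθ : 0 < θ) (ha : 0 < a) (hcup : 0 < cup) (hcc : cup < cdown)
    (hνmax : 0 ≤ νmax) (hw : 0 < w)
    (V : ℝ → ℝ)
    (hV : ∀ x, V x = -(1 / (θ * cdown * a)) * (Real.exp (-(x * θ * a * cdown)) - 1)) :
    sSup ((fun νv => νv - νv * deriv V w + θ * (cup - cdown * (1 + a * νv)) * V w)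
        '' Set.Icc 0 νmax) < 0 := by
  have hcdown : 0 < cdown := hcup.trans hcc
  have hk : 0 < θ * cdown * a := by positivity
  -- derivative of V at w
  have hd : deriv V w = Real.exp (-(w * θ * a * cdown)) := by
    have hVf : V = fun x => -(1 / (θ * cdown * a)) * (Real.exp (-(x * θ * a * cdown)) - 1) :=
      funext hV
    rw [hVf]
    have hx : HasDerivAt (fun x : ℝ => -(x * θ * a * cdown)) (-(θ * a * cdown)) w := by
      have := ((hasDerivAt_id w).mul_const (θ * a * cdown)).neg
      simpa [mul_assoc, Pi.neg_def] using this
    have hexp := hx.exp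
    have h1 := (hexp.sub_const 1).const_mul (-(1 / (θ * cdown * a)))
    have h2 := h1.deriv
    rw [h2]
    field_simp
  -- the Hamiltonian is constant in ν
  have key : ∀ ν : ℝ, ν - ν * deriv V w + θ * (cup - cdown * (1 + a * ν)) * V w
      = θ * (cup - cdown) * V w := by
    intro ν
    rw [hd, hV w]
    field_simp
    ring
  have himg : ((fun νv => νv - νv * deriv V w + θ * (cup - cdown * (1 + a * νv)) * V w)
      '' Set.Icc 0 νmax) = {θ * (cup - cdown) * V w} := by
    apply Subset.antisymm
    · rintro x ⟨ν, _, rfl⟩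
      exact key ν
    · rintro x rfl
      exact ⟨0, ⟨le_refl 0, hνmax⟩, key 0⟩
  rw [himg, csSup_singleton]
  have hE : Real.exp (-(w * θ * a * cdown)) < 1 := by
    apply Real.exp_lt_one_iff.mpr
    nlinarith
  have hVw : 0 < V w := by
    rw [hV w]
    have h1 : (0:ℝ) < 1 / (θ * cdown * a) := by positivity
    nlinarith
  nlinarith [mul_pos (mul_pos hθ (sub_pos.mpr hcc)) hVw]
end
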